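/- Let a and b be coprime odd positive integers, and let p be an odd prime such that p ≠ ab, p ≠ ab + 1, and p = x² + aby² for some integers x, y. Then λ(a, b; (a+b)(p−1)/8 + 1) = λ(1, ab; (ab+1)(p−1)/8 + 1). -/

import Mathlib

/-- `lam a b N` is λ(a, b; N+1): the finite sum of x·y over all integer pairs (x, y)
with x ≡ y ≡ 1 (mod 4) and a·x² + b·y² = 8N + a + b. -/
noncomputable def lam (a b N : ℤ) : ℤ :=
  ∑ᶠ xy ∈ {xy : ℤ × ℤ | xy.1 % 4 = 1 ∧ xy.2 % 4 = 1 ∧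
      a * xy.1 ^ 2 + b * xy.2 ^ 2 = 8 * N + a + b}, xy.1 * xy.2

/-- Sign normaliser: the representative of {u, -u} that is ≡ 1 mod 4 (for odd u). -/
def sg (u : ℤ) : ℤ := if u % 4 = 1 then u else -u

lemma sg_mod4 (u : ℤ) (hu : u % 2 = 1) : sg u % 4 = 1 := by
  unfold sg; split_ifs with h
  · exact h
  · omega

lemma sg_sq (u : ℤ) : sg u ^ 2 = u ^ 2 := by
  unfold sg; split_ifs <;> ring

lemma eq_sg (X u : ℤ) (hu : u % 2 = 1) (hX : X % 4 = 1) (hsq : X ^ 2 = u ^ 2) :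
    X = sg u := by
  have h : (X - u) * (X + u) = 0 := by linear_combination hsq
  unfold sg
  rcases mul_eq_zero.mp h with h1 | h1 <;> split_ifs with h2 <;> omega

lemma sg_mul (u v : ℤ) (hu : u % 2 = 1) (hv : v % 2 = 1) :
    sg u * sg v = sg (u * v) := by
  have hu4 : u % 4 = 1 ∨ u % 4 = 3 := by omega
  have hv4 : v % 4 = 1 ∨ v % 4 = 3 := by omega
  rcases hu4 with h1 | h1 <;> rcases hv4 with h2 | h2
  · obtain ⟨c, rfl⟩ : ∃ c, u = 4 * c + 1 := ⟨(u - 1) / 4, by omega⟩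
    obtain ⟨d, rfl⟩ : ∃ d, v = 4 * d + 1 := ⟨(v - 1) / 4, by omega⟩
    have h3 : (4 * c + 1) * (4 * d + 1) % 4 = 1 := by
      rw [show (4 * c + 1) * (4 * d + 1) = 1 + 4 * (4 * c * d + c + d) by ring,
        Int.add_mul_emod_self_left]
      decide
    unfold sg
    rw [if_pos h1, if_pos h2, if_pos h3]
  · obtain ⟨c, rfl⟩ : ∃ c, u = 4 * c + 1 := ⟨(u - 1) / 4, by omega⟩
    obtain ⟨d, rfl⟩ : ∃ d, v = 4 * d + 3 := ⟨(v - 3) / 4, by omega⟩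
    have h3 : (4 * c + 1) * (4 * d + 3) % 4 = 3 := by
      rw [show (4 * c + 1) * (4 * d + 3) = 3 + 4 * (4 * c * d + 3 * c + d) by ring,
        Int.add_mul_emod_self_left]
      decide
    unfold sg
    rw [if_pos h1, if_neg (by omega), if_neg (by rw [h3]; decide)]
    ring
  · obtain ⟨c, rfl⟩ : ∃ c, u = 4 * c + 3 := ⟨(u - 3) / 4, by omega⟩
    obtain ⟨d, rfl⟩ : ∃ d, v = 4 * d + 1 := ⟨(v - 1) / 4, by omega⟩
    have h3 : (4 * c + 3) * (4 * d + 1) % 4 = 3 := by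
      rw [show (4 * c + 3) * (4 * d + 1) = 3 + 4 * (4 * c * d + c + 3 * d) by ring,
        Int.add_mul_emod_self_left]
      decide
    unfold sg
    rw [if_neg (by omega), if_pos h2, if_neg (by rw [h3]; decide)]
    ring
  · obtain ⟨c, rfl⟩ : ∃ c, u = 4 * c + 3 := ⟨(u - 3) / 4, by omega⟩
    obtain ⟨d, rfl⟩ : ∃ d, v = 4 * d + 3 := ⟨(v - 3) / 4, by omega⟩
    have h3 : (4 * c + 3) * (4 * d + 3) % 4 = 1 := by
      rw [show (4 * c + 3) * (4 * d + 3) = 1 + 4 * (4 * c * d + 3 * c + 3 * d + 2) by ring,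
        Int.add_mul_emod_self_left]
      decide
    unfold sg
    rw [if_neg (by omega), if_neg (by omega), if_pos h3]
    ring

lemma key_sum (u v u' v' M K : ℤ) (hu : u % 2 = 1) (hv : v % 2 = 1)
    (hu' : u' % 2 = 1) (hv' : v' % 2 = 1)
    (h1 : u * v = M + K) (h2 : u' * v' = M - K) (hK : (4:ℤ) ∣ K) :
    sg u * sg v + sg u' * sg v' = 2 * sg M := by
  obtain ⟨k, rfl⟩ := hK
  rw [sg_mul u v hu hv, sg_mul u' v' hu' hv', h1, h2]
  unfold sg
  split_ifs <;> omega

lemma classify_aux (a b p s t X Y : ℤ) (ha : 0 < a) (hb : 0 < b)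
    (hao : Odd a) (hbo : Odd b) (hp : Prime p)
    (hps : p = s ^ 2 + a * b * t ^ 2) (hcas : IsCoprime a s)
    (hY : Odd Y) (heq : a * X ^ 2 + b * Y ^ 2 = (a + b) * p)
    (hd : p ∣ a * X * t - Y * s) :
    ∃ ε δ : ℤ, (ε = 1 ∨ ε = -1) ∧ (δ = 1 ∨ δ = -1) ∧
      X = ε * s + δ * b * t ∧ Y = ε * a * t - δ * s := by
  have hp0 : p ≠ 0 := hp.ne_zero
  have ha0 : a ≠ 0 := ha.ne'
  obtain ⟨k, hk⟩ := hd
  have key : (a * X * s + a * b * Y * t) ^ 2 = p ^ 2 * (a * (a + b) - a * b * k ^ 2) := by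
    linear_combination (a * (s ^ 2 + a * b * t ^ 2)) * heq + (-(a * (a + b) * p)) * hps +
      (-(a * b) * (a * X * t - Y * s + p * k)) * hk
  have hdm : p ∣ a * X * s + a * b * Y * t :=
    hp.dvd_of_dvd_pow (n := 2) ⟨p * (a * (a + b) - a * b * k ^ 2), by linear_combination key⟩
  obtain ⟨m, hm⟩ := hdm
  have hmk : m ^ 2 + a * b * k ^ 2 = a * (a + b) := by
    have h2 : p ^ 2 * (m ^ 2 + a * b * k ^ 2) = p ^ 2 * (a * (a + b)) := by
      linear_combination key - ((a * X * s + a * b * Y * t) + p * m) * hm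
    exact mul_left_cancel₀ (pow_ne_zero 2 hp0) h2
  have hX' : a * X = s * m + a * b * t * k := by
    have h3 : p * (a * X) = p * (s * m + a * b * t * k) := by
      linear_combination s * hm + (a * b * t) * hk + (a * X) * hps
    exact mul_left_cancel₀ hp0 h3
  have hY' : Y = t * m - s * k := by
    have h4 : p * Y = p * (t * m - s * k) := by
      linear_combination t * hm + (-s) * hk + Y * hps
    exact mul_left_cancel₀ hp0 h4
  have heab : Even (a * (a + b)) := (hao.add_odd hbo).mul_left a
  have hmo : Odd m ∧ Odd k := by
    rcases Int.even_or_odd m with h1 | h1 <;> rcases Int.even_or_odd k with h2 | h2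
    · exfalso
      have hYe : Even Y := by
        rw [hY']
        exact Even.sub (h1.mul_left t) (h2.mul_left s)
      exact (Int.not_odd_iff_even.mpr hYe) hY
    · exfalso
      have hodd : Odd (m ^ 2 + a * b * k ^ 2) := by
        have he : Even (m ^ 2) := by rw [pow_two]; exact h1.mul_left m
        exact he.add_odd ((hao.mul hbo).mul (h2.pow))
      rw [hmk] at hodd
      exact (Int.not_odd_iff_even.mpr heab) hodd
    · exfalso
      have hodd : Odd (m ^ 2 + a * b * k ^ 2) := by
        have he : Even (a * b * k ^ 2) := by
          have : Even (k ^ 2) := by rw [pow_two]; exact h2.mul_left k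
          exact this.mul_left (a * b)
        exact (h1.pow).add_even he
      rw [hmk] at hodd
      exact (Int.not_odd_iff_even.mpr heab) hodd
    · exact ⟨h1, h2⟩
  obtain ⟨hmo1, hko1⟩ := hmo
  have ham : a ∣ m := by
    have h5 : a ∣ s * m := ⟨X - b * t * k, by linear_combination -hX'⟩
    exact hcas.dvd_of_dvd_mul_left h5
  have hkne : k ≠ 0 := by rintro rfl; simp [Int.odd_iff] at hko1
  have hk2 : 1 ≤ k ^ 2 := by
    have h1 := Int.one_le_abs hkne
    nlinarith [sq_abs k]
  have hm2 : m ^ 2 ≤ a ^ 2 := by nlinarith [mul_pos ha hb]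
  have hmne : m ≠ 0 := by rintro rfl; simp [Int.odd_iff] at hmo1
  have habs : |m| = a := by
    have h6 : a ≤ |m| := Int.le_of_dvd (abs_pos.mpr hmne) ((dvd_abs a m).mpr ham)
    have h7 : |m| ≤ a := by nlinarith [sq_abs m, abs_nonneg m]
    linarith
  have hmcase : m = a ∨ m = -a := (abs_eq (le_of_lt ha)).mp habs
  have hkk : k ^ 2 = 1 := by
    have h8 : a * b * k ^ 2 = a * b * 1 := by
      rcases hmcase with h | h
      · linear_combination hmk - (m + a) * h
      · linear_combination hmk - (m - a) * h
    exact mul_left_cancel₀ (mul_ne_zero ha0 hb.ne') h8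
  have hkcase : k = 1 ∨ k = -1 := by
    have h9 : (k - 1) * (k + 1) = 0 := by linear_combination hkk
    rcases mul_eq_zero.mp h9 with h | h
    · left; linarith
    · right; linarith
  rcases hmcase with h | h <;> rcases hkcase with h' | h'
  · exact ⟨1, 1, Or.inl rfl, Or.inl rfl,
      mul_left_cancel₀ ha0 (by linear_combination hX' + s * h + a * b * t * h'),
      by linear_combination hY' + t * h - s * h'⟩
  · exact ⟨1, -1, Or.inl rfl, Or.inr rfl,
      mul_left_cancel₀ ha0 (by linear_combination hX' + s * h + a * b * t * h'),
      by linear_combination hY' + t * h - s * h'⟩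
  · exact ⟨-1, 1, Or.inr rfl, Or.inl rfl,
      mul_left_cancel₀ ha0 (by linear_combination hX' + s * h + a * b * t * h'),
      by linear_combination hY' + t * h - s * h'⟩
  · exact ⟨-1, -1, Or.inr rfl, Or.inr rfl,
      mul_left_cancel₀ ha0 (by linear_combination hX' + s * h + a * b * t * h'),
      by linear_combination hY' + t * h - s * h'⟩

lemma classify (a b p s t X Y : ℤ) (ha : 0 < a) (hb : 0 < b)
    (hao : Odd a) (hbo : Odd b) (hp : Prime p)
    (hps : p = s ^ 2 + a * b * t ^ 2) (hpnab : ¬ p ∣ a * b)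
    (hY : Odd Y) (heq : a * X ^ 2 + b * Y ^ 2 = (a + b) * p) :
    (X ^ 2 = (s + b * t) ^ 2 ∧ Y ^ 2 = (s - a * t) ^ 2) ∨
    (X ^ 2 = (s - b * t) ^ 2 ∧ Y ^ 2 = (s + a * t) ^ 2) := by
  have hcas : IsCoprime a s := by
    rw [Int.isCoprime_iff_gcd_eq_one]
    by_contra hg
    have h1 : (Int.gcd a s : ℤ) ∣ a := Int.gcd_dvd_left a s
    have h2 : (Int.gcd a s : ℤ) ∣ s := Int.gcd_dvd_right a s
    have h3 : (Int.gcd a s : ℤ) ∣ p := by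
      rw [hps]
      exact dvd_add (dvd_pow h2 two_ne_zero) (h1.trans ⟨b * t ^ 2, by ring⟩)
    obtain ⟨e, he⟩ := h3
    rcases hp.irreducible.isUnit_or_isUnit he with hu | hu
    · rw [Int.isUnit_iff] at hu
      rcases hu with hu | hu
      · exact hg (by exact_mod_cast hu)
      · omega
    · rw [Int.isUnit_iff] at hu
      have hpd : p ∣ a := by
        rcases hu with hu | hu
        · rw [hu, mul_one] at he
          exact he ▸ h1
        · have hg' : (Int.gcd a s : ℤ) = -p := by rw [he, hu]; ring
          rw [hg'] at h1
          exact (neg_dvd).mp h1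
      exact hpnab (hpd.mul_right b)
  have key0 : (a * X * t - Y * s) * (a * X * t + Y * s) = p * (a * (a + b) * t ^ 2 - Y ^ 2) := by
    linear_combination (a * t ^ 2) * heq + (Y ^ 2) * hps
  rcases hp.dvd_or_dvd ⟨_, key0⟩ with hd | hd
  · obtain ⟨ε, δ, hε, hδ, hXe, hYe⟩ :=
      classify_aux a b p s t X Y ha hb hao hbo hp hps hcas hY heq hd
    rcases hε with rfl | rfl <;> rcases hδ with rfl | rfl
    · exact Or.inl ⟨by rw [hXe]; ring, by rw [hYe]; ring⟩
    · exact Or.inr ⟨by rw [hXe]; ring, by rw [hYe]; ring⟩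
    · exact Or.inr ⟨by rw [hXe]; ring, by rw [hYe]; ring⟩
    · exact Or.inl ⟨by rw [hXe]; ring, by rw [hYe]; ring⟩
  · have hd' : p ∣ a * X * t - (-Y) * s := by
      rwa [show a * X * t - (-Y) * s = a * X * t + Y * s by ring]
    have hY2 : Odd (-Y) := hY.neg
    have heq2 : a * X ^ 2 + b * (-Y) ^ 2 = (a + b) * p := by linear_combination heq
    obtain ⟨ε, δ, hε, hδ, hXe, hYe⟩ :=
      classify_aux a b p s t X (-Y) ha hb hao hbo hp hps hcas hY2 heq2 hd'
    have hYe' : Y = -(ε * a * t - δ * s) := by linarith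
    rcases hε with rfl | rfl <;> rcases hδ with rfl | rfl
    · exact Or.inl ⟨by rw [hXe]; ring, by rw [hYe']; ring⟩
    · exact Or.inr ⟨by rw [hXe]; ring, by rw [hYe']; ring⟩
    · exact Or.inr ⟨by rw [hXe]; ring, by rw [hYe']; ring⟩
    · exact Or.inl ⟨by rw [hXe]; ring, by rw [hYe']; ring⟩

theorem stmt5 (a b : ℤ) (ha : 0 < a) (hb : 0 < b) (hao : Odd a) (hbo : Odd b)
    (hcop : IsCoprime a b)
    (p : ℕ) (hp : p.Prime) (hpodd : Odd p)
    (hpab : (p : ℤ) ≠ a * b) (hpab1 : (p : ℤ) ≠ a * b + 1)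
    (x y : ℤ) (hxy : (p : ℤ) = x ^ 2 + a * b * y ^ 2) :
    lam a b ((a + b) * ((p : ℤ) - 1) / 8) = lam 1 (a * b) ((a * b + 1) * ((p : ℤ) - 1) / 8) := by
  have hpZ : Prime ((p : ℤ)) := Nat.prime_iff_prime_int.mp hp
  have hp2 : (2:ℤ) ≤ (p : ℤ) := by exact_mod_cast hp.two_le
  have hpo2 : (p : ℤ) % 2 = 1 := by
    have := Nat.odd_iff.mp hpodd
    omega
  have hpoZ : Odd ((p : ℤ)) := Int.odd_iff.mpr hpo2
  -- parity of x, y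
  have hpar : (Even x ∧ Odd y) ∨ (Odd x ∧ Even y) := by
    rcases Int.even_or_odd x with hx | hx <;> rcases Int.even_or_odd y with hy | hy
    · exfalso
      have hE : Even (x ^ 2 + a * b * y ^ 2) := by
        have h1 : Even (x ^ 2) := by rw [pow_two]; exact hx.mul_left x
        have h2 : Even (a * b * y ^ 2) := by
          have : Even (y ^ 2) := by rw [pow_two]; exact hy.mul_left y
          exact this.mul_left (a * b)
        exact h1.add h2
      rw [← hxy] at hE
      exact (Int.not_odd_iff_even.mpr hE) hpoZ
    · exact Or.inl ⟨hx, hy⟩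
    · exact Or.inr ⟨hx, hy⟩
    · exfalso
      have hE : Even (x ^ 2 + a * b * y ^ 2) := by
        have h1 : Odd (x ^ 2) := hx.pow
        have h2 : Odd (a * b * y ^ 2) := (hao.mul hbo).mul (hy.pow)
        exact h1.add_odd h2
      rw [← hxy] at hE
      exact (Int.not_odd_iff_even.mpr hE) hpoZ
  -- p does not divide a*b
  have hpnab : ¬ (p : ℤ) ∣ a * b := by
    intro hd
    have h1 : (p : ℤ) ∣ x ^ 2 := by
      have h2 : (p : ℤ) ∣ a * b * y ^ 2 := hd.mul_right _
      have h3 : x ^ 2 = (p : ℤ) - a * b * y ^ 2 := by linear_combination -hxy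
      rw [h3]; exact dvd_sub dvd_rfl h2
    obtain ⟨c, hc⟩ := hpZ.dvd_of_dvd_pow h1
    by_cases hc0 : c = 0
    · subst hc0
      rw [mul_zero] at hc
      obtain ⟨e, hede⟩ := hd
      have h5 : (p : ℤ) * 1 = (p : ℤ) * (e * y ^ 2) := by
        linear_combination hxy + y ^ 2 * hede + x * hc
      have h6 : (1:ℤ) = e * y ^ 2 := by
        have := mul_left_cancel₀ (by linarith : (p:ℤ) ≠ 0) h5
        linarith
      have h7 : y ^ 2 = 1 := by
        have hdvd1 : y ^ 2 ∣ 1 := ⟨e, by linarith [h6]⟩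
        have hle := Int.le_of_dvd one_pos hdvd1
        have hy0 : y ^ 2 ≠ 0 := by
          intro h0
          rw [h0] at h6; simp at h6
        have := sq_nonneg y
        omega
      have h8 : e = 1 := by
        rw [h7] at h6; linarith
      rw [h8, mul_one] at hede
      exact hpab hede.symm
    · have h9 : 1 ≤ c ^ 2 := by
        have h1 := Int.one_le_abs hc0
        nlinarith [sq_abs c]
      have hx2 : x ^ 2 = (p:ℤ) ^ 2 * c ^ 2 := by rw [hc]; ring
      nlinarith [hxy, mul_nonneg (mul_nonneg ha.le hb.le) (sq_nonneg y), sq_nonneg (p:ℤ)]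
  -- x and y are nonzero
  have hs0 : x ≠ 0 := by
    intro h0
    rw [h0] at hxy
    have hdvd : (p : ℤ) ∣ (a * b) * y ^ 2 := ⟨1, by linear_combination -hxy⟩
    rcases hpZ.dvd_or_dvd hdvd with hd | hd
    · exact hpnab hd
    · obtain ⟨c, hc⟩ := hpZ.dvd_of_dvd_pow hd
      have hc0 : c ≠ 0 := by
        intro h1; rw [h1, mul_zero] at hc; rw [hc] at hxy; simp at hxy; nlinarith
      have h9 : 1 ≤ c ^ 2 := by
        have h1 := Int.one_le_abs hc0
        nlinarith [sq_abs c]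
      have hy2 : y ^ 2 = (p:ℤ) ^ 2 * c ^ 2 := by rw [hc]; ring
      nlinarith [hxy, mul_pos ha hb, mul_nonneg (mul_nonneg ha.le hb.le) (sq_nonneg y)]
  have ht0 : y ≠ 0 := by
    intro h0
    rw [h0] at hxy
    have hxx : (p : ℤ) = x * x := by linear_combination hxy
    rcases hpZ.irreducible.isUnit_or_isUnit hxx with hu | hu <;>
      rw [Int.isUnit_iff] at hu <;> rcases hu with hu | hu <;>
      rw [hu] at hxx <;> omega
  obtain ⟨α, hA⟩ := id hao
  obtain ⟨β, hB⟩ := id hbo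
  -- divisibility by 8
  have h8 : (8:ℤ) ∣ (a + b) * ((p : ℤ) - 1) := by
    rw [hxy]
    rcases hpar with ⟨hx, hy⟩ | ⟨hx, hy⟩
    · obtain ⟨σ, hσ⟩ := hx
      obtain ⟨τ, hτ⟩ := hy
      obtain ⟨e, he⟩ := Int.even_mul_succ_self (α + β)
      refine ⟨(α+β+1) * (σ^2 + (2*α+1)*(2*β+1)*(τ^2+τ)) + α*β*(α+β+1) + e, ?_⟩
      rw [hA, hB, hσ, hτ]
      linear_combination (4:ℤ) * he
    · obtain ⟨σ, hσ⟩ := hx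
      obtain ⟨τ, hτ⟩ := hy
      refine ⟨(α+β+1) * (σ^2 + σ + (2*α+1)*(2*β+1)*τ^2), ?_⟩
      rw [hA, hB, hσ, hτ]
      ring
  have h8' : (8:ℤ) ∣ (a * b + 1) * ((p : ℤ) - 1) := by
    rw [hxy]
    rcases hpar with ⟨hx, hy⟩ | ⟨hx, hy⟩
    · obtain ⟨σ, hσ⟩ := hx
      obtain ⟨τ, hτ⟩ := hy
      obtain ⟨e, he⟩ := Int.even_mul_succ_self (2*α*β + α + β)
      refine ⟨(2*α*β+α+β+1) * (σ^2 + (2*α+1)*(2*β+1)*(τ^2+τ)) + e, ?_⟩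
      rw [hA, hB, hσ, hτ]
      linear_combination (4:ℤ) * he
    · obtain ⟨σ, hσ⟩ := hx
      obtain ⟨τ, hτ⟩ := hy
      refine ⟨(2*α*β+α+β+1) * (σ^2 + σ + (2*α+1)*(2*β+1)*τ^2), ?_⟩
      rw [hA, hB, hσ, hτ]
      ring
  have hEq1 : 8 * ((a + b) * ((p : ℤ) - 1) / 8) + a + b = (a + b) * (p : ℤ) := by
    rw [Int.mul_ediv_cancel' h8]; ring
  have hEq2 : 8 * ((a * b + 1) * ((p : ℤ) - 1) / 8) + 1 + a * b = (1 + a * b) * (p : ℤ) := by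
    rw [Int.mul_ediv_cancel' h8']; ring
  -- oddness of the linear combinations
  have hoc : ∀ c : ℤ, Odd c → (x + c * y) % 2 = 1 := by
    intro c hc
    rcases hpar with ⟨hx, hy⟩ | ⟨hx, hy⟩
    · exact Int.odd_iff.mp (hx.add_odd (hc.mul hy))
    · exact Int.odd_iff.mp (hx.add_even (hy.mul_left c))
  have hoc' : ∀ c : ℤ, Odd c → (x - c * y) % 2 = 1 := by
    intro c hc
    rcases hpar with ⟨hx, hy⟩ | ⟨hx, hy⟩
    · exact Int.odd_iff.mp (hx.sub_odd (hc.mul hy))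
    · exact Int.odd_iff.mp (hx.sub_even (hy.mul_left c))
  have hu1o : (x + b * y) % 2 = 1 := hoc b hbo
  have hv1o : (x - a * y) % 2 = 1 := hoc' a hao
  have hu2o : (x - b * y) % 2 = 1 := hoc' b hbo
  have hv2o : (x + a * y) % 2 = 1 := hoc a hao
  have hw1o : (x + a * b * y) % 2 = 1 := hoc (a * b) (hao.mul hbo)
  have hw2o : (x - a * b * y) % 2 = 1 := hoc' (a * b) (hao.mul hbo)
  have hz1o : (x - y) % 2 = 1 := by
    have := hoc' 1 odd_one; rwa [one_mul] at this
  have hz2o : (x + y) % 2 = 1 := by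
    have := hoc 1 odd_one; rwa [one_mul] at this
  -- the shifts are divisible by 4
  have hxyE : Even (x * y) := by
    rcases hpar with ⟨hx, _⟩ | ⟨_, hy⟩
    · exact hx.mul_right y
    · exact hy.mul_left x
  obtain ⟨e, he⟩ := hxyE
  have hK4 : (4:ℤ) ∣ (b - a) * (x * y) := ⟨(β - α) * e, by rw [hA, hB, he]; ring⟩
  have hK'4 : (4:ℤ) ∣ (a * b - 1) * (x * y) := ⟨(2*α*β + α + β) * e, by rw [hA, hB, he]; ring⟩
  -- distinctness of the two solutions
  have hd1 : ((sg (x + b*y), sg (x - a*y)) : ℤ × ℤ) ≠ (sg (x - b*y), sg (x + a*y)) := by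
    intro h
    have h1 : sg (x + b*y) = sg (x - b*y) := congrArg Prod.fst h
    have h2 : (x + b*y) ^ 2 = (x - b*y) ^ 2 := by
      rw [← sg_sq (x + b*y), ← sg_sq (x - b*y), h1]
    have h3 : 4 * (b * (x * y)) = 0 := by linear_combination h2
    have h4 : b * (x * y) = 0 := by linarith
    rcases mul_eq_zero.mp h4 with h5 | h5
    · exact hb.ne' h5
    · rcases mul_eq_zero.mp h5 with h6 | h6
      · exact hs0 h6
      · exact ht0 h6
  have hd2 : ((sg (x + a*b*y), sg (x - y)) : ℤ × ℤ) ≠ (sg (x - a*b*y), sg (x + y)) := by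
    intro h
    have h1 : sg (x + a*b*y) = sg (x - a*b*y) := congrArg Prod.fst h
    have h2 : (x + a*b*y) ^ 2 = (x - a*b*y) ^ 2 := by
      rw [← sg_sq (x + a*b*y), ← sg_sq (x - a*b*y), h1]
    have h3 : 4 * (a * b * (x * y)) = 0 := by linear_combination h2
    have h4 : a * b * (x * y) = 0 := by linarith
    rcases mul_eq_zero.mp h4 with h5 | h5
    · exact (mul_pos ha hb).ne' h5
    · rcases mul_eq_zero.mp h5 with h6 | h6
      · exact hs0 h6
      · exact ht0 h6
  -- the solution sets
  have hS1 : {xy : ℤ × ℤ | xy.1 % 4 = 1 ∧ xy.2 % 4 = 1 ∧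
      a * xy.1 ^ 2 + b * xy.2 ^ 2 = 8 * ((a + b) * ((p : ℤ) - 1) / 8) + a + b} =
      ({(sg (x + b*y), sg (x - a*y)), (sg (x - b*y), sg (x + a*y))} : Set (ℤ × ℤ)) := by
    ext ⟨X, Y⟩
    simp only [Set.mem_setOf_eq, Set.mem_insert_iff, Set.mem_singleton_iff, Prod.mk.injEq]
    constructor
    · rintro ⟨h1, h2, h3⟩
      have hY : Odd Y := Int.odd_iff.mpr (by omega)
      have heq : a * X ^ 2 + b * Y ^ 2 = (a + b) * (p : ℤ) := h3.trans hEq1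
      rcases classify a b (p:ℤ) x y X Y ha hb hao hbo hpZ hxy hpnab hY heq with
        ⟨hx2, hy2⟩ | ⟨hx2, hy2⟩
      · exact Or.inl ⟨eq_sg X _ hu1o h1 hx2, eq_sg Y _ hv1o h2 hy2⟩
      · exact Or.inr ⟨eq_sg X _ hu2o h1 hx2, eq_sg Y _ hv2o h2 hy2⟩
    · rintro (⟨rfl, rfl⟩ | ⟨rfl, rfl⟩)
      · refine ⟨sg_mod4 _ hu1o, sg_mod4 _ hv1o, ?_⟩
        rw [hEq1, sg_sq, sg_sq]
        linear_combination (-(a+b)) * hxy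
      · refine ⟨sg_mod4 _ hu2o, sg_mod4 _ hv2o, ?_⟩
        rw [hEq1, sg_sq, sg_sq]
        linear_combination (-(a+b)) * hxy
  have hS2 : {xy : ℤ × ℤ | xy.1 % 4 = 1 ∧ xy.2 % 4 = 1 ∧
      1 * xy.1 ^ 2 + a * b * xy.2 ^ 2 = 8 * ((a * b + 1) * ((p : ℤ) - 1) / 8) + 1 + a * b} =
      ({(sg (x + a*b*y), sg (x - y)), (sg (x - a*b*y), sg (x + y))} : Set (ℤ × ℤ)) := by
    ext ⟨X, Y⟩
    simp only [Set.mem_setOf_eq, Set.mem_insert_iff, Set.mem_singleton_iff, Prod.mk.injEq]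
    constructor
    · rintro ⟨h1, h2, h3⟩
      have hY : Odd Y := Int.odd_iff.mpr (by omega)
      have heq : 1 * X ^ 2 + a * b * Y ^ 2 = (1 + a * b) * (p : ℤ) := h3.trans hEq2
      have hps' : (p : ℤ) = x ^ 2 + 1 * (a * b) * y ^ 2 := by linear_combination hxy
      have hpnab' : ¬ (p : ℤ) ∣ 1 * (a * b) := by rwa [one_mul]
      rcases classify 1 (a*b) (p:ℤ) x y X Y one_pos (mul_pos ha hb) odd_one (hao.mul hbo)
          hpZ hps' hpnab' hY heq with ⟨hx2, hy2⟩ | ⟨hx2, hy2⟩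
      · rw [one_mul] at hy2
        exact Or.inl ⟨eq_sg X _ hw1o h1 hx2, eq_sg Y _ hz1o h2 hy2⟩
      · rw [one_mul] at hy2
        exact Or.inr ⟨eq_sg X _ hw2o h1 hx2, eq_sg Y _ hz2o h2 hy2⟩
    · rintro (⟨rfl, rfl⟩ | ⟨rfl, rfl⟩)
      · refine ⟨sg_mod4 _ hw1o, sg_mod4 _ hz1o, ?_⟩
        rw [hEq2, sg_sq, sg_sq]
        linear_combination (-(1+a*b)) * hxy
      · refine ⟨sg_mod4 _ hw2o, sg_mod4 _ hz2o, ?_⟩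
        rw [hEq2, sg_sq, sg_sq]
        linear_combination (-(1+a*b)) * hxy
  unfold lam
  rw [hS1, hS2, finsum_mem_pair hd1, finsum_mem_pair hd2]
  show sg (x + b*y) * sg (x - a*y) + sg (x - b*y) * sg (x + a*y) =
    sg (x + a*b*y) * sg (x - y) + sg (x - a*b*y) * sg (x + y)
  rw [key_sum _ _ _ _ (x^2 - a*b*y^2) ((b-a)*(x*y)) hu1o hv1o hu2o hv2o
      (by ring) (by ring) hK4,
    key_sum _ _ _ _ (x^2 - a*b*y^2) ((a*b-1)*(x*y)) hw1o hz1o hw2o hz2o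
      (by ring) (by ring) hK'4]
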